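/- Let φ : X → Y be an extension of compact flows of a topological group T, such that the set of almost periodic points of the flow on X is dense in X and the flow on Y is minimal. Then φ is semi-open. -/

import Mathlib

open Pointwise


/-- A continuous surjection `g : A → B` is *semi-open* if for every nonempty open set
`U ⊆ A`, the interior of the image `g '' U` is nonempty. -/
def SemiOpen {A B : Type*} [TopologicalSpace A] [TopologicalSpace B] (g : A → B) : Prop :=
  ∀ U : Set A, IsOpen U → U.Nonempty → (interior (g '' U)).Nonempty

/-- A point `x` is *almost periodic* for the flow `T ↷ X` if its orbit closure
`cl(T·x)` is a minimal subset, i.e. every point of `cl(T·x)` has orbit closure equal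
to `cl(T·x)`. -/
def IsAlmostPeriodicPt (T : Type*) {X : Type*} [Monoid T] [MulAction T X]
    [TopologicalSpace X] (x : X) : Prop :=
  x ∈ closure (MulAction.orbit T x) ∧
  ∀ z ∈ closure (MulAction.orbit T x),
    closure (MulAction.orbit T z) = closure (MulAction.orbit T x)

/-- Lemma 6. Let `φ : X → Y` be an extension of compact flows of a topological group
`T`, where the almost periodic points of `X` are dense and the flow on `Y` is minimal.
Then `φ` is semi-open. -/
theorem semiOpen_of_denseAP_of_minimal
    {T X Y : Type*} [Group T] [TopologicalSpace T] [IsTopologicalGroup T]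
    [TopologicalSpace X] [CompactSpace X] [T2Space X]
    [MulAction T X] [ContinuousSMul T X]
    [TopologicalSpace Y] [CompactSpace Y] [T2Space Y]
    [MulAction T Y] [ContinuousSMul T Y]
    {φ : X → Y} (hc : Continuous φ) (hs : Function.Surjective φ)
    (hequiv : ∀ (t : T) (x : X), φ (t • x) = t • φ x)
    (hap : Dense {x : X | IsAlmostPeriodicPt T x})
    (hmin : ∀ y : Y, Dense (MulAction.orbit T y)) :
    SemiOpen φ := by
  intro U hU hUne
  obtain ⟨x, hxAP, hxU⟩ := hap.exists_mem_open hU hUne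
  obtain ⟨W, hWn, hWc, hWU⟩ := exists_mem_nhds_isClosed_subset (hU.mem_nhds hxU)
  set V := interior W with hVdef
  have hVopen : IsOpen V := isOpen_interior
  have hxV : x ∈ V := mem_interior_iff_mem_nhds.2 hWn
  have hclV : closure V ⊆ U := (closure_minimal interior_subset hWc).trans hWU
  set M := closure (MulAction.orbit T x) with hMdef
  have hMcl : IsClosed M := isClosed_closure
  have hMc : IsCompact M := hMcl.isCompact
  have hMinv : ∀ (t : T), ∀ m ∈ M, t • m ∈ M := by
    intro t m hm
    exact map_mem_closure (continuous_const_smul t) hm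
      (fun w hw => by
        obtain ⟨g, hg⟩ := hw
        exact ⟨t * g, by simp only []; rw [mul_smul]; simp only [] at hg; rw [hg]⟩)
  -- cover M by translates of V
  have hcov : M ⊆ ⋃ t : T, t • V := by
    intro z hz
    have hzM : closure (MulAction.orbit T z) = M := hxAP.2 z hz
    have hx' : x ∈ closure (MulAction.orbit T z) := by rw [hzM]; exact hxAP.1
    obtain ⟨w, hwV, g, hg⟩ := mem_closure_iff.1 hx' V hVopen hxV
    have hg' : g • z = w := hg
    refine Set.mem_iUnion.2 ⟨g⁻¹, ⟨w, hwV, ?_⟩⟩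
    show g⁻¹ • w = z
    rw [← hg', inv_smul_smul]
  obtain ⟨s, hscov⟩ := hMc.elim_finite_subcover (fun t : T => t • V)
    (fun t => hVopen.smul t) hcov
  set K := φ '' (closure V ∩ M) with hKdef
  have hKcomp : IsCompact K := ((isClosed_closure.inter hMcl).isCompact).image hc
  have hKcl : IsClosed K := hKcomp.isClosed
  have hxM : x ∈ M := hxAP.1
  -- Y = φ '' M
  have hYM : ∀ y : Y, y ∈ φ '' M := by
    intro y
    have horb : MulAction.orbit T (φ x) ⊆ φ '' M := by
      rintro _ ⟨t, rfl⟩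
      exact ⟨t • x, hMinv t x hxM, hequiv t x⟩
    have hcl : closure (MulAction.orbit T (φ x)) ⊆ φ '' M :=
      closure_minimal horb (hMc.image hc).isClosed
    exact hcl ((hmin (φ x)).closure_eq ▸ Set.mem_univ y)
  have hYcov : (⋃ t : s, (t : T) • K) = Set.univ := by
    refine Set.eq_univ_of_forall fun y => ?_
    obtain ⟨m, hmM, rfl⟩ := hYM y
    obtain ⟨t, hts, v, hvV, hvm⟩ := Set.mem_iUnion₂.1 (hscov hmM)
    have hvM : v ∈ M := by
      have := hMinv t⁻¹ m hmM
      rwa [← hvm, inv_smul_smul] at this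
    have hvm' : t • v = m := hvm
    refine Set.mem_iUnion.2 ⟨⟨t, hts⟩, ⟨φ v, ⟨v, ⟨subset_closure hvV, hvM⟩, rfl⟩, ?_⟩⟩
    show t • φ v = φ m
    rw [← hequiv, hvm']
  have : Nonempty Y := ⟨φ x⟩
  obtain ⟨⟨t, _⟩, hint⟩ := nonempty_interior_of_iUnion_of_closed
    (fun i : s => hKcl.smul (i : T)) hYcov
  rw [interior_smul] at hint
  obtain ⟨y, hy⟩ := hint
  obtain ⟨y', hy', _⟩ := hy
  have hKU : K ⊆ φ '' U := Set.image_mono (Set.inter_subset_left.trans hclV)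
  exact ⟨y', interior_mono hKU hy'⟩
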